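/- Let Q : J → Matrix(n,n,ℂ) be a continuous family of Hermitian matrices on an open interval J ⊆ ℝ such that the rank of Q(φ) is constant on J. Then the signature of Q(φ) is locally constant (hence constant) on J. -/

import Mathlib

open scoped Classical

open Matrix

noncomputable section
variable {n : ℕ}

/-- quadratic form -/
def qf (M : Matrix (Fin n) (Fin n) ℂ) (x : Fin n → ℂ) : ℝ :=
  Complex.re (star x ⬝ᵥ M *ᵥ x)

def nsq (x : Fin n → ℂ) : ℝ := ∑ i, ‖x i‖^2

lemma nsq_nonneg (x : Fin n → ℂ) : 0 ≤ nsq x :=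
  Finset.sum_nonneg fun i _ => sq_nonneg _

lemma nsq_pos {x : Fin n → ℂ} (hx : x ≠ 0) : 0 < nsq x := by
  obtain ⟨i, hi⟩ := Function.ne_iff.mp hx
  have : (0:ℝ) < ‖x i‖^2 := by
    have := norm_pos_iff.mpr hi
    positivity
  exact lt_of_lt_of_le this (Finset.single_le_sum (f := fun i => ‖x i‖^2)
    (fun j _ => sq_nonneg _) (Finset.mem_univ i))

lemma abs_entry_le_nsq (x : Fin n → ℂ) (i j : Fin n) : ‖x i‖ * ‖x j‖ ≤ nsq x := by
  have h1 : ‖x i‖^2 ≤ nsq x := Finset.single_le_sum (f := fun i => ‖x i‖^2)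
    (fun j _ => sq_nonneg _) (Finset.mem_univ i)
  have h2 : ‖x j‖^2 ≤ nsq x := Finset.single_le_sum (f := fun i => ‖x i‖^2)
    (fun j _ => sq_nonneg _) (Finset.mem_univ j)
  nlinarith [norm_nonneg (x i), norm_nonneg (x j)]

/-- perturbation bound -/
lemma qf_sub_le (A B : Matrix (Fin n) (Fin n) ℂ) (x : Fin n → ℂ) :
    |qf A x - qf B x| ≤ (∑ i, ∑ j, ‖(A - B) i j‖) * nsq x := by
  have hE : qf A x - qf B x = qf (A - B) x := by
    simp [qf, Matrix.sub_mulVec, dotProduct_sub]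
  rw [hE]
  have h1 : |qf (A - B) x| ≤ ‖star x ⬝ᵥ (A - B) *ᵥ x‖ := by
    simpa [qf] using Complex.abs_re_le_norm (star x ⬝ᵥ (A - B) *ᵥ x)
  refine h1.trans ?_
  have h2 : ‖star x ⬝ᵥ (A - B) *ᵥ x‖ ≤ ∑ i, ∑ j, ‖x i‖ * ‖(A - B) i j‖ * ‖x j‖ := by
    refine (norm_sum_le _ _).trans ?_
    refine Finset.sum_le_sum fun i _ => ?_
    refine (norm_mul_le _ _).trans ?_
    have hst : ‖star x i‖ = ‖x i‖ := norm_star _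
    rw [hst]
    calc ‖x i‖ * ‖((A - B) *ᵥ x) i‖ ≤ ‖x i‖ * ∑ j, ‖(A - B) i j‖ * ‖x j‖ := by
          refine mul_le_mul_of_nonneg_left ?_ (norm_nonneg _)
          rw [Matrix.mulVec, dotProduct]
          exact (norm_sum_le _ _).trans (Finset.sum_le_sum fun j _ => norm_mul_le _ _)
      _ = ∑ j, ‖x i‖ * ‖(A - B) i j‖ * ‖x j‖ := by rw [Finset.mul_sum]; ring_nf
  refine h2.trans ?_
  rw [Finset.sum_mul]
  refine Finset.sum_le_sum fun i _ => ?_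
  rw [Finset.sum_mul]
  refine Finset.sum_le_sum fun j _ => ?_
  have := abs_entry_le_nsq x i j
  have hM := norm_nonneg ((A - B) i j)
  nlinarith

end

section
variable {n : ℕ}

lemma star_mul_self_eq (z : ℂ) : star z * z = ((‖z‖^2 : ℝ) : ℂ) := by
  rw [Complex.star_def, ← Complex.normSq_eq_conj_mul_self, Complex.normSq_eq_norm_sq]

lemma exists_subspace (M : Matrix (Fin n) (Fin n) ℂ) (hM : M.IsHermitian) (S : Finset (Fin n)) :
    ∃ W : Submodule ℂ (Fin n → ℂ), Module.finrank ℂ W = S.card ∧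
      ∀ x ∈ W, ∃ t : Fin n → ℝ, (∀ i, 0 ≤ t i) ∧ (∀ i ∉ S, t i = 0) ∧
        (∑ i, t i = nsq x) ∧ qf M x = ∑ i, hM.eigenvalues i * t i := by
  set U : Matrix (Fin n) (Fin n) ℂ := (hM.eigenvectorUnitary : Matrix (Fin n) (Fin n) ℂ) with hUdef
  have hU1 : star U * U = 1 := Unitary.coe_star_mul_self _
  have hU2 : U * star U = 1 := Unitary.coe_mul_star_self _
  set w : Fin n → (Fin n → ℂ) := fun i => U *ᵥ Pi.single i 1 with hwdef
  have hinj : Function.Injective (Matrix.mulVecLin U) := by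
    intro x y hxy
    have : star U *ᵥ (U *ᵥ x) = star U *ᵥ (U *ᵥ y) := by
      simp only [Matrix.mulVecLin_apply] at hxy; rw [hxy]
    simpa [Matrix.mulVec_mulVec, hU1] using this
  have hli : LinearIndependent ℂ w := by
    have hb := (Pi.basisFun ℂ (Fin n)).linearIndependent
    have := hb.map' (Matrix.mulVecLin U) (LinearMap.ker_eq_bot.mpr hinj)
    have hw : w = ⇑(Matrix.mulVecLin U) ∘ ⇑(Pi.basisFun ℂ (Fin n)) := by
      funext i
      simp [hwdef, Pi.basisFun_apply]
    rw [hw]; exact this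
  refine ⟨Submodule.span ℂ (Set.range fun i : {i // i ∈ S} => w i), ?_, ?_⟩
  · have := finrank_span_eq_card (hli.comp ((↑) : {i // i ∈ S} → Fin n) Subtype.val_injective)
    simpa [Function.comp_def] using this
  · intro x hx
    have hy0 : ∀ i ∉ S, (star U *ᵥ x) i = 0 := by
      intro i hi
      induction hx using Submodule.span_induction with
      | mem z hz =>
          obtain ⟨j, rfl⟩ := hz
          have h1 : star U *ᵥ w (↑j : Fin n) = Pi.single (↑j : Fin n) 1 := by
            show star U *ᵥ (U *ᵥ Pi.single (↑j : Fin n) 1) = _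
            rw [Matrix.mulVec_mulVec, hU1, Matrix.one_mulVec]
          rw [h1, Pi.single_apply, if_neg]
          intro h; rw [h] at hi; exact hi j.2
      | zero => simp
      | add z₁ z₂ _ _ h1 h2 => rw [Matrix.mulVec_add]; simp [h1, h2]
      | smul c z _ h1 => rw [Matrix.mulVec_smul]; simp [h1]
    set y : Fin n → ℂ := star U *ᵥ x with hydef
    have hstary : star y = star x ᵥ* U := by
      rw [hydef, Matrix.star_mulVec, Matrix.star_eq_conjTranspose,
        Matrix.conjTranspose_conjTranspose]
    refine ⟨fun i => ‖y i‖^2, fun i => sq_nonneg _, fun i hi => by simp [hy0 i hi], ?_, ?_⟩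
    · have key : star y ⬝ᵥ y = star x ⬝ᵥ x := by
        rw [hstary, ← Matrix.dotProduct_mulVec, hydef, Matrix.mulVec_mulVec, hU2,
          Matrix.one_mulVec]
      have h1 : (star y ⬝ᵥ y).re = ∑ i, ‖y i‖^2 := by
        rw [dotProduct, Complex.re_sum]
        refine Finset.sum_congr rfl fun i _ => ?_
        rw [Pi.star_apply, star_mul_self_eq, Complex.ofReal_re]
      have h2 : (star x ⬝ᵥ x).re = nsq x := by
        rw [dotProduct, Complex.re_sum, nsq]
        refine Finset.sum_congr rfl fun i _ => ?_
        rw [Pi.star_apply, star_mul_self_eq, Complex.ofReal_re]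
      rw [← h1, key, h2]
    · have key : star x ⬝ᵥ M *ᵥ x
          = star y ⬝ᵥ (Matrix.diagonal (fun i => (hM.eigenvalues i : ℂ))) *ᵥ y := by
        conv_lhs => rw [hM.spectral_theorem]
        rw [hstary, ← Matrix.dotProduct_mulVec, hydef]
        congr 1
        rw [Unitary.conjStarAlgAut_apply, ← Matrix.mulVec_mulVec, ← Matrix.mulVec_mulVec]
        rfl
      rw [qf, key, dotProduct, Complex.re_sum]
      refine Finset.sum_congr rfl fun i _ => ?_
      rw [Matrix.mulVec_diagonal, Pi.star_apply]
      have h3 : star (y i) * ((hM.eigenvalues i : ℂ) * y i)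
          = (hM.eigenvalues i : ℂ) * ((‖y i‖^2 : ℝ) : ℂ) := by
        rw [← star_mul_self_eq]; ring
      rw [h3, ← Complex.ofReal_mul, Complex.ofReal_re]

end

section
variable {n : ℕ}

lemma exists_ne_zero_mem_inf (W V : Submodule ℂ (Fin n → ℂ))
    (h : n < Module.finrank ℂ W + Module.finrank ℂ V) :
    ∃ x : Fin n → ℂ, x ≠ 0 ∧ x ∈ W ∧ x ∈ V := by
  have hsum := Submodule.finrank_sup_add_finrank_inf_eq W V
  have hle : Module.finrank ℂ ↥(W ⊔ V) ≤ n := by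
    have := Submodule.finrank_le (W ⊔ V)
    simpa [Module.finrank_fin_fun] using this
  have hpos : 0 < Module.finrank ℂ ↥(W ⊓ V) := by omega
  have hne : W ⊓ V ≠ ⊥ := by
    intro hb
    rw [hb, finrank_bot] at hpos
    exact lt_irrefl 0 hpos
  obtain ⟨x, hx, hx0⟩ := Submodule.exists_mem_ne_zero_of_ne_bot hne
  exact ⟨x, hx0, hx.1, hx.2⟩

lemma card_filter_add (μ : Fin n → ℝ) :
    (Finset.univ.filter fun i => 0 < μ i).card + (Finset.univ.filter fun i => μ i < 0).card
      = (Finset.univ.filter fun i => μ i ≠ 0).card := by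
  rw [← Finset.card_union_of_disjoint]
  · congr 1
    ext i
    simp only [Finset.mem_union, Finset.mem_filter, Finset.mem_univ, true_and]
    constructor
    · rintro (h | h) <;> [exact ne_of_gt h; exact ne_of_lt h]
    · intro h; rcases lt_or_gt_of_ne h with h' | h'
      · exact Or.inr h'
      · exact Or.inl h'
  · rw [Finset.disjoint_left]
    intro i hi hi'
    simp only [Finset.mem_filter, Finset.mem_univ, true_and] at hi hi'
    exact absurd hi' (not_lt_of_gt hi)

lemma rank_eq_pos_add_neg (M : Matrix (Fin n) (Fin n) ℂ) (hM : M.IsHermitian) :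
    M.rank = (Finset.univ.filter fun i => 0 < hM.eigenvalues i).card
      + (Finset.univ.filter fun i => hM.eigenvalues i < 0).card := by
  rw [card_filter_add, hM.rank_eq_card_non_zero_eigs, Fintype.card_subtype]

lemma key_comparison (A B : Matrix (Fin n) (Fin n) ℂ) (hA : A.IsHermitian) (hB : B.IsHermitian)
    (hrank : A.rank = B.rank) (c : ℝ) (hc : 0 < c)
    (hcA : ∀ i, hA.eigenvalues i ≠ 0 → c ≤ |hA.eigenvalues i|)
    (hd : (∑ i, ∑ j, ‖(A - B) i j‖) < c) :
    (Finset.univ.filter fun i => 0 < hB.eigenvalues i).card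
        = (Finset.univ.filter fun i => 0 < hA.eigenvalues i).card ∧
      (Finset.univ.filter fun i => hB.eigenvalues i < 0).card
        = (Finset.univ.filter fun i => hA.eigenvalues i < 0).card := by
  set D : ℝ := ∑ i, ∑ j, ‖(A - B) i j‖ with hDdef
  have hD0 : 0 ≤ D :=
    Finset.sum_nonneg fun i _ => Finset.sum_nonneg fun j _ => norm_nonneg _
  set μA := hA.eigenvalues with hμA
  set μB := hB.eigenvalues with hμB
  set pA := (Finset.univ.filter fun i => 0 < μA i).card with hpA
  set nA := (Finset.univ.filter fun i => μA i < 0).card with hnA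
  set pB := (Finset.univ.filter fun i => 0 < μB i).card with hpB
  set nB := (Finset.univ.filter fun i => μB i < 0).card with hnB
  -- claim 1 : pA ≤ pB
  have claim1 : pA ≤ pB := by
    by_contra hcon
    push_neg at hcon
    obtain ⟨W, hWrank, hWprop⟩ := exists_subspace A hA (Finset.univ.filter fun i => 0 < μA i)
    obtain ⟨V, hVrank, hVprop⟩ := exists_subspace B hB (Finset.univ.filter fun i => ¬ 0 < μB i)
    have hVcard : (Finset.univ.filter fun i => ¬ 0 < μB i).card = n - pB := by
      have := Finset.card_filter_add_card_filter_not
        (s := (Finset.univ : Finset (Fin n))) (p := fun i => 0 < μB i)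
      simp only [Finset.card_univ, Fintype.card_fin] at this
      omega
    have hpBn : pB ≤ n := by
      have := Finset.card_filter_le (Finset.univ : Finset (Fin n)) (fun i => 0 < μB i)
      simpa using this
    obtain ⟨x, hx0, hxW, hxV⟩ := exists_ne_zero_mem_inf W V (by
      rw [hWrank, hVrank, hVcard, ← hpA]; omega)
    obtain ⟨t, ht0, htsupp, htsum, htqf⟩ := hWprop x hxW
    obtain ⟨s, hs0, hssupp, hssum, hsqf⟩ := hVprop x hxV
    have hqfA : c * nsq x ≤ qf A x := by
      rw [htqf, ← htsum, Finset.mul_sum]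
      refine Finset.sum_le_sum fun i _ => ?_
      by_cases hi : 0 < μA i
      · have : c ≤ μA i := le_trans (hcA i (ne_of_gt hi)) (le_of_eq (abs_of_pos hi))
        exact mul_le_mul_of_nonneg_right this (ht0 i)
      · rw [htsupp i (by simp [hi]), mul_zero, mul_zero]
    have hqfB : qf B x ≤ 0 := by
      rw [hsqf]
      refine Finset.sum_nonpos fun i _ => ?_
      by_cases hi : 0 < μB i
      · rw [hssupp i (by simp [hi]), mul_zero]
      · exact mul_nonpos_of_nonpos_of_nonneg (not_lt.mp hi) (hs0 i)
    have hpert := qf_sub_le A B x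
    have hnsq := nsq_pos hx0
    rw [← hDdef] at hpert
    have : 0 < qf B x := by
      have h1 : qf A x - qf B x ≤ D * nsq x := le_trans (le_abs_self _) hpert
      nlinarith
    linarith
  -- claim 2 : nA ≤ nB
  have claim2 : nA ≤ nB := by
    by_contra hcon
    push_neg at hcon
    obtain ⟨W, hWrank, hWprop⟩ := exists_subspace A hA (Finset.univ.filter fun i => μA i < 0)
    obtain ⟨V, hVrank, hVprop⟩ := exists_subspace B hB (Finset.univ.filter fun i => ¬ μB i < 0)
    have hVcard : (Finset.univ.filter fun i => ¬ μB i < 0).card = n - nB := by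
      have := Finset.card_filter_add_card_filter_not
        (s := (Finset.univ : Finset (Fin n))) (p := fun i => μB i < 0)
      simp only [Finset.card_univ, Fintype.card_fin] at this
      omega
    have hnBn : nB ≤ n := by
      have := Finset.card_filter_le (Finset.univ : Finset (Fin n)) (fun i => μB i < 0)
      simpa using this
    obtain ⟨x, hx0, hxW, hxV⟩ := exists_ne_zero_mem_inf W V (by
      rw [hWrank, hVrank, hVcard, ← hnA]; omega)
    obtain ⟨t, ht0, htsupp, htsum, htqf⟩ := hWprop x hxW
    obtain ⟨s, hs0, hssupp, hssum, hsqf⟩ := hVprop x hxV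
    have hqfA : qf A x ≤ -c * nsq x := by
      rw [htqf, ← htsum, Finset.mul_sum]
      refine Finset.sum_le_sum fun i _ => ?_
      by_cases hi : μA i < 0
      · have : μA i ≤ -c := by
          have := hcA i (ne_of_lt hi)
          rw [abs_of_neg hi] at this
          linarith
        exact mul_le_mul_of_nonneg_right this (ht0 i)
      · rw [htsupp i (by simp [hi]), mul_zero, mul_zero]
    have hqfB : 0 ≤ qf B x := by
      rw [hsqf]
      refine Finset.sum_nonneg fun i _ => ?_
      by_cases hi : μB i < 0
      · rw [hssupp i (by simp [hi]), mul_zero]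
      · exact mul_nonneg (not_lt.mp hi) (hs0 i)
    have hpert := qf_sub_le A B x
    have hnsq := nsq_pos hx0
    rw [← hDdef] at hpert
    have : qf B x < 0 := by
      have h1 : qf B x - qf A x ≤ D * nsq x := le_trans (le_abs_self _) (by rwa [abs_sub_comm])
      nlinarith
    linarith
  have h1 := rank_eq_pos_add_neg A hA
  have h2 := rank_eq_pos_add_neg B hB
  rw [hrank, h2] at h1
  rw [← hμA, ← hμB] at h1
  rw [← hpA, ← hnA, ← hpB, ← hnB] at h1
  constructor <;> omega

end

/-- The signature of a complex matrix: number of positive minus number of negative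
eigenvalues when the matrix is Hermitian, and `0` otherwise. -/
noncomputable def matrixSignature {m : Type*} [Fintype m] [DecidableEq m]
    (A : Matrix m m ℂ) : ℤ :=
  if h : A.IsHermitian then
    ((Finset.univ.filter fun i => 0 < h.eigenvalues i).card : ℤ) -
      ((Finset.univ.filter fun i => h.eigenvalues i < 0).card : ℤ)
  else 0

/-- if `Q : J → Matrix(n,n,ℂ)` is a continuous family of Hermitian matrices
on an open interval `J ⊆ ℝ` whose rank is constant on `J`, then the signature of `Q(φ)`
is constant on `J`. -/
theorem signature_constant_of_rank_constant {n : ℕ} (a b : ℝ)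
    (Q : ℝ → Matrix (Fin n) (Fin n) ℂ)
    (hherm : ∀ φ ∈ Set.Ioo a b, (Q φ).IsHermitian)
    (hcont : ∀ i j, ContinuousOn (fun φ => Q φ i j) (Set.Ioo a b))
    (hrank : ∃ ρ : ℕ, ∀ φ ∈ Set.Ioo a b, (Q φ).rank = ρ) :
    ∃ s : ℤ, ∀ φ ∈ Set.Ioo a b, matrixSignature (Q φ) = s := by
  obtain ⟨ρ, hρ⟩ := hrank
  by_cases hab : a < b
  swap
  · exact ⟨0, fun φ hφ => absurd (hφ.1.trans hφ.2) hab⟩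
  set φ₀ : ℝ := (a + b) / 2 with hφ₀def
  have hφ₀ : φ₀ ∈ Set.Ioo a b := ⟨by rw [hφ₀def]; linarith, by rw [hφ₀def]; linarith⟩
  refine ⟨matrixSignature (Q φ₀), ?_⟩
  -- local constancy
  have hloc : ∀ φ ∈ Set.Ioo a b, ∃ ε > 0, Metric.ball φ ε ⊆ Set.Ioo a b ∧
      ∀ ψ ∈ Metric.ball φ ε, matrixSignature (Q ψ) = matrixSignature (Q φ) := by
    intro φ hφ
    have hA := hherm φ hφ
    set T := Finset.univ.filter fun i => hA.eigenvalues i ≠ 0 with hT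
    set c : ℝ := if hTne : T.Nonempty then T.inf' hTne (fun i => |hA.eigenvalues i|) else 1
      with hcdef
    have hc : 0 < c := by
      rw [hcdef]
      split_ifs with hTne
      · rw [Finset.lt_inf'_iff]
        intro i hi
        rw [hT, Finset.mem_filter] at hi
        exact abs_pos.mpr hi.2
      · exact one_pos
    have hcA : ∀ i, hA.eigenvalues i ≠ 0 → c ≤ |hA.eigenvalues i| := by
      intro i hi
      have hmem : i ∈ T := by rw [hT, Finset.mem_filter]; exact ⟨Finset.mem_univ i, hi⟩
      rw [hcdef]
      split_ifs with hTne
      · exact Finset.inf'_le _ hmem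
      · exact absurd ⟨i, hmem⟩ hTne
    -- continuity of the entrywise distance
    have hcont2 : ContinuousOn (fun ψ => ∑ i, ∑ j, ‖(Q φ - Q ψ) i j‖) (Set.Ioo a b) := by
      apply continuousOn_finset_sum
      intro i _
      apply continuousOn_finset_sum
      intro j _
      simp only [Matrix.sub_apply]
      exact (continuousOn_const.sub (hcont i j)).norm
    have htend : Filter.Tendsto (fun ψ => ∑ i, ∑ j, ‖(Q φ - Q ψ) i j‖)
        (nhdsWithin φ (Set.Ioo a b)) (nhds 0) := by
      have := hcont2 φ hφ
      unfold ContinuousWithinAt at this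
      simpa using this
    have hev : ∀ᶠ ψ in nhdsWithin φ (Set.Ioo a b),
        (∑ i, ∑ j, ‖(Q φ - Q ψ) i j‖) < c :=
      htend.eventually_lt_const hc
    rw [Filter.Eventually, Metric.mem_nhdsWithin_iff] at hev
    obtain ⟨ε₁, hε₁, hball1⟩ := hev
    obtain ⟨ε₂, hε₂, hball2⟩ := Metric.isOpen_iff.mp isOpen_Ioo φ hφ
    refine ⟨min ε₁ ε₂, lt_min hε₁ hε₂, ?_, ?_⟩
    · exact fun ψ hψ => hball2 (Metric.ball_subset_ball (min_le_right _ _) hψ)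
    · intro ψ hψ
      have hψIoo : ψ ∈ Set.Ioo a b := hball2 (Metric.ball_subset_ball (min_le_right _ _) hψ)
      have hψd : (∑ i, ∑ j, ‖(Q φ - Q ψ) i j‖) < c :=
        hball1 ⟨Metric.ball_subset_ball (min_le_left _ _) hψ, hψIoo⟩
      have hB := hherm ψ hψIoo
      have hrk : (Q φ).rank = (Q ψ).rank := by rw [hρ φ hφ, hρ ψ hψIoo]
      obtain ⟨hp, hn⟩ := key_comparison (Q φ) (Q ψ) hA hB hrk c hc hcA hψd
      rw [matrixSignature, matrixSignature, dif_pos hB, dif_pos hA, hp, hn]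
  -- clopen argument on the preconnected interval
  intro φ hφ
  by_contra hne
  set Tg : Set ℝ := {ψ | ψ ∈ Set.Ioo a b ∧ matrixSignature (Q ψ) = matrixSignature (Q φ₀)}
    with hTg
  set Tb : Set ℝ := {ψ | ψ ∈ Set.Ioo a b ∧ matrixSignature (Q ψ) ≠ matrixSignature (Q φ₀)}
    with hTb
  have hTgopen : IsOpen Tg := by
    rw [Metric.isOpen_iff]
    rintro ψ ⟨hψIoo, hψeq⟩
    obtain ⟨ε, hε, hsub, hconst⟩ := hloc ψ hψIoo
    exact ⟨ε, hε, fun χ hχ => ⟨hsub hχ, by rw [hconst χ hχ, hψeq]⟩⟩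
  have hTbopen : IsOpen Tb := by
    rw [Metric.isOpen_iff]
    rintro ψ ⟨hψIoo, hψne⟩
    obtain ⟨ε, hε, hsub, hconst⟩ := hloc ψ hψIoo
    exact ⟨ε, hε, fun χ hχ => ⟨hsub hχ, by rw [hconst χ hχ]; exact hψne⟩⟩
  have hcover : Set.Ioo a b ⊆ Tg ∪ Tb := by
    intro ψ hψ
    by_cases h : matrixSignature (Q ψ) = matrixSignature (Q φ₀)
    · exact Or.inl ⟨hψ, h⟩
    · exact Or.inr ⟨hψ, h⟩
  have hne1 : (Set.Ioo a b ∩ Tg).Nonempty := ⟨φ₀, hφ₀, hφ₀, rfl⟩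
  have hne2 : (Set.Ioo a b ∩ Tb).Nonempty := ⟨φ, hφ, hφ, hne⟩
  obtain ⟨x, -, hxg, hxb⟩ :=
    isPreconnected_Ioo (a := a) (b := b) Tg Tb hTgopen hTbopen hcover hne1 hne2
  exact hxb.2 hxg.2
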